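/- Let (ξ_i)_{i≥1} be i.i.d. nonnegative random variables, let N_n be Poisson with mean n independent of (ξ_i), and suppose E[ξ₁] ≤ C/n for a constant C and all n (ξ₁'s law may depend on n). Let B ⊆ [0,1] be measurable with Leb(∂B) = 0 and suppose for every ε > 0 there is N such that |Leb(B) − m^{-1}·#{i ∈ [m] : i/m ∈ B}| ≤ ε for all m ≥ N. Then E[ | ∑_{i=1}^{n} 1{i/n ∈ B} ξ_i − ∑_{i=1}^{N_n} 1{i/N_n ∈ B} ξ_i | ] → 0 as n → ∞. -/

import Mathlib

open MeasureTheory Set Filter ProbabilityTheory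
open scoped ENNReal Topology

namespace DePoisAux

lemma tsum_exp (x : ℝ) : ∑' k : ℕ, x ^ k / (Nat.factorial k) = Real.exp x := by
  rw [Real.exp_eq_exp_ℝ, NormedSpace.exp_eq_tsum_div]

lemma summable_f0 (x : ℝ) : Summable (fun k : ℕ => x ^ k / (Nat.factorial k)) :=
  Real.summable_pow_div_factorial x

lemma f1_succ (x : ℝ) (k : ℕ) :
    ((k+1 : ℕ) : ℝ) * x ^ (k+1) / (Nat.factorial (k+1)) = x * (x ^ k / (Nat.factorial k)) := by
  rw [Nat.factorial_succ]
  have h1 : ((Nat.factorial k : ℝ)) ≠ 0 := Nat.cast_ne_zero.2 (Nat.factorial_ne_zero k)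
  have h2 : ((k:ℝ) + 1) ≠ 0 := by positivity
  push_cast
  field_simp
  ring

lemma summable_f1 (x : ℝ) : Summable (fun k : ℕ => (k : ℝ) * x ^ k / (Nat.factorial k)) := by
  rw [← summable_nat_add_iff 1]
  exact Summable.congr ((summable_f0 x).mul_left x) (fun k => (f1_succ x k).symm)

lemma tsum_f1 (x : ℝ) : ∑' k : ℕ, (k : ℝ) * x ^ k / (Nat.factorial k) = x * Real.exp x := by
  rw [Summable.tsum_eq_zero_add (summable_f1 x)]
  simp only [f1_succ x]
  rw [tsum_mul_left, tsum_exp]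
  simp

lemma f2_succ (x : ℝ) (k : ℕ) :
    ((k+1 : ℕ) : ℝ) * (((k+1 : ℕ) : ℝ) - 1) * x ^ (k+1) / (Nat.factorial (k+1))
      = x * ((k : ℝ) * x ^ k / (Nat.factorial k)) := by
  rw [Nat.factorial_succ]
  have h1 : ((Nat.factorial k : ℝ)) ≠ 0 := Nat.cast_ne_zero.2 (Nat.factorial_ne_zero k)
  have h2 : ((k:ℝ) + 1) ≠ 0 := by positivity
  push_cast
  field_simp
  ring

lemma summable_f2 (x : ℝ) :
    Summable (fun k : ℕ => (k : ℝ) * ((k : ℝ) - 1) * x ^ k / (Nat.factorial k)) := by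
  rw [← summable_nat_add_iff 1]
  exact Summable.congr ((summable_f1 x).mul_left x) (fun k => (f2_succ x k).symm)

lemma tsum_f2 (x : ℝ) :
    ∑' k : ℕ, (k : ℝ) * ((k : ℝ) - 1) * x ^ k / (Nat.factorial k) = x^2 * Real.exp x := by
  rw [Summable.tsum_eq_zero_add (summable_f2 x)]
  simp only [f2_succ x]
  rw [tsum_mul_left, tsum_f1]
  simp
  ring

lemma var_term_eq (x : ℝ) (k : ℕ) :
    (Real.exp (-x) * x ^ k / (Nat.factorial k)) * ((k:ℝ) - x)^2
      = Real.exp (-x) * (((k : ℝ) * ((k : ℝ) - 1) * x ^ k / (Nat.factorial k))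
        + (1 - 2*x) * ((k : ℝ) * x ^ k / (Nat.factorial k))
        + x^2 * (x ^ k / (Nat.factorial k))) := by
  have h1 : ((Nat.factorial k : ℝ)) ≠ 0 := Nat.cast_ne_zero.2 (Nat.factorial_ne_zero k)
  field_simp
  ring

lemma summable_var (x : ℝ) :
    Summable (fun k : ℕ => (Real.exp (-x) * x ^ k / (Nat.factorial k)) * ((k:ℝ) - x)^2) := by
  refine Summable.congr ?_ (fun k => (var_term_eq x k).symm)
  exact ((((summable_f2 x).add ((summable_f1 x).mul_left _)).add
    ((summable_f0 x).mul_left _)).mul_left _)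

lemma poisson_var (x : ℝ) :
    ∑' k : ℕ, (Real.exp (-x) * x ^ k / (Nat.factorial k)) * ((k:ℝ) - x)^2 = x := by
  simp only [var_term_eq x]
  rw [tsum_mul_left, Summable.tsum_add (((summable_f2 x).add ((summable_f1 x).mul_left _)))
        ((summable_f0 x).mul_left _),
      Summable.tsum_add (summable_f2 x) ((summable_f1 x).mul_left _),
      tsum_mul_left, tsum_mul_left, tsum_f2, tsum_f1, tsum_exp]
  have h := Real.exp_ne_zero x
  rw [Real.exp_neg]
  field_simp
  ring

lemma frontier_cross {B : Set ℝ} {x y : ℝ} (hx : x ∈ B) (hy : y ∉ B) :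
    ∃ z ∈ frontier B, |x - z| ≤ |x - y| := by
  by_contra hcon
  push_neg at hcon
  set u := min x y with hu
  set v := max x y with hv
  have hxI : x ∈ Set.Icc u v := ⟨min_le_left _ _, le_max_left _ _⟩
  have hyI : y ∈ Set.Icc u v := ⟨min_le_right _ _, le_max_right _ _⟩
  have hvu : v - u = |x - y| := by
    rcases le_total x y with h | h
    · rw [hu, hv, min_eq_left h, max_eq_right h, abs_of_nonpos (by linarith)]; ring
    · rw [hu, hv, min_eq_right h, max_eq_left h, abs_of_nonneg (by linarith)]
  have hdist : ∀ z ∈ Set.Icc u v, |x - z| ≤ |x - y| := by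
    intro z hz
    rw [← hvu, abs_sub_le_iff]
    exact ⟨by linarith [hxI.2, hz.1], by linarith [hxI.1, hz.2]⟩
  have hIccF : ∀ z ∈ Set.Icc u v, z ∉ frontier B := by
    intro z hz hzf
    exact absurd (hdist z hz) (not_le.2 (hcon z hzf))
  have hfr : frontier B = closure B ∩ closure Bᶜ := frontier_eq_closure_inter_closure
  have hint : interior B = (closure Bᶜ)ᶜ := by
    rw [← compl_compl B, interior_compl, compl_compl]
  have hxi : x ∈ interior B := by
    have h1 : x ∈ closure B := subset_closure hx
    have h2 : x ∉ closure Bᶜ := fun h => (hIccF x hxI) (hfr ▸ ⟨h1, h⟩)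
    rw [hint]; exact h2
  have hyi : y ∉ closure B := by
    intro h1
    exact (hIccF y hyI) (hfr ▸ ⟨h1, subset_closure hy⟩)
  have hconn := isPreconnected_Icc (a := u) (b := v)
  have hsub : Set.Icc u v ⊆ interior B ∪ (closure B)ᶜ := by
    intro z hz
    by_cases hzc : z ∈ closure B
    · left
      have h2 : z ∉ closure Bᶜ := fun h => (hIccF z hz) (hfr ▸ ⟨hzc, h⟩)
      rw [hint]; exact h2
    · right; exact hzc
  obtain ⟨z, _, hz2⟩ := hconn (interior B) (closure B)ᶜ isOpen_interior
    isClosed_closure.isOpen_compl hsub ⟨x, hxI, hxi⟩ ⟨y, hyI, hyi⟩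
  exact hz2.2 (interior_subset_closure hz2.1)

open scoped Classical in
lemma grid_count {F : Set ℝ} {n : ℕ} {r ε' : ℝ} (hn : 1 ≤ n) (hε' : 0 ≤ ε')
    (h1n : (1:ℝ)/n ≤ r)
    (hvol : volume (Metric.thickening (2*r) F) ≤ ENNReal.ofReal ε') :
    (((Finset.Icc 1 n).filter (fun i : ℕ => ((i:ℝ)/n) ∈ Metric.thickening r F)).card : ℝ)
      ≤ (n:ℝ) * ε' := by
  set s := (Finset.Icc 1 n).filter (fun i : ℕ => ((i:ℝ)/n) ∈ Metric.thickening r F) with hs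
  have hnpos : (0:ℝ) < n := by exact_mod_cast hn
  set g : ℕ → Set ℝ := fun i => Set.Ioc (((i:ℝ)-1)/n) ((i:ℝ)/n) with hg
  have hvolg : ∀ i : ℕ, volume (g i) = ENNReal.ofReal (1/n) := by
    intro i
    rw [hg]
    simp only [Real.volume_Ioc]
    congr 1
    field_simp
    ring
  have hdisj : (↑s : Set ℕ).PairwiseDisjoint g := by
    intro i _ j _ hij
    rcases hij.lt_or_gt with h | h
    · refine Set.Ioc_disjoint_Ioc.2 ?_
      have h' : (i:ℝ) ≤ (j:ℝ) - 1 := by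
        have : (i:ℝ) + 1 ≤ j := by exact_mod_cast h
        linarith
      have h'' : (i:ℝ)/n ≤ ((j:ℝ)-1)/n := by gcongr
      exact le_trans (min_le_left _ _) (h''.trans (le_max_right _ _))
    · refine Set.Ioc_disjoint_Ioc.2 ?_
      have h' : (j:ℝ) ≤ (i:ℝ) - 1 := by
        have : (j:ℝ) + 1 ≤ i := by exact_mod_cast h
        linarith
      have h'' : (j:ℝ)/n ≤ ((i:ℝ)-1)/n := by gcongr
      exact le_trans (min_le_right _ _) (h''.trans (le_max_left _ _))
  have hsubT : ∀ i ∈ s, g i ⊆ Metric.thickening (2*r) F := by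
    intro i hi x hx
    rw [hs, Finset.mem_filter] at hi
    obtain ⟨z, hzF, hdz⟩ := Metric.mem_thickening_iff.1 hi.2
    apply Metric.mem_thickening_iff.2
    refine ⟨z, hzF, ?_⟩
    rw [hg] at hx
    have hx1 : ((i:ℝ)-1)/n < x := hx.1
    have hx2 : x ≤ (i:ℝ)/n := hx.2
    have hdx : dist x ((i:ℝ)/n) ≤ 1/n := by
      rw [Real.dist_eq, abs_sub_le_iff]
      have h2 : (i:ℝ)/n - 1/n = ((i:ℝ)-1)/n := by field_simp
      exact ⟨by linarith, by linarith⟩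
    calc dist x z ≤ dist x ((i:ℝ)/n) + dist ((i:ℝ)/n) z := dist_triangle _ _ _
      _ < 1/n + r := by linarith
      _ ≤ 2*r := by linarith
  have hcards : (s.card : ℝ≥0∞) * ENNReal.ofReal (1/n) ≤ ENNReal.ofReal ε' := by
    have h1 : ∑ i ∈ s, volume (g i) = volume (⋃ i ∈ s, g i) :=
      (measure_biUnion_finset hdisj (fun i _ => measurableSet_Ioc)).symm
    have h2 : volume (⋃ i ∈ s, g i) ≤ volume (Metric.thickening (2*r) F) :=
      measure_mono (Set.iUnion₂_subset hsubT)
    have h3 : ∑ i ∈ s, volume (g i) = (s.card : ℝ≥0∞) * ENNReal.ofReal (1/n) := by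
      simp [hvolg, Finset.sum_const, nsmul_eq_mul]
    rw [← h3]
    exact h1.trans_le (h2.trans hvol)
  have hof : ENNReal.ofReal ((s.card : ℝ) * (1/n)) ≤ ENNReal.ofReal ε' := by
    rw [ENNReal.ofReal_mul (by positivity)]
    simpa [ENNReal.ofReal_natCast] using hcards
  have hre : (s.card : ℝ) * (1/n) ≤ ε' := (ENNReal.ofReal_le_ofReal_iff hε').1 hof
  calc (s.card : ℝ) = ((s.card : ℝ) * (1/n)) * n := by field_simp
    _ ≤ ε' * n := by nlinarith
    _ = (n:ℝ) * ε' := by ring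

open scoped Classical in
noncomputable def ind (B : Set ℝ) (m i : ℕ) : ℝ :=
  if (i ≤ m ∧ ((i:ℝ)/m) ∈ B) then 1 else 0

lemma ind_nonneg (B : Set ℝ) (m i : ℕ) : 0 ≤ ind B m i := by
  unfold ind; split <;> norm_num

lemma ind_le_one (B : Set ℝ) (m i : ℕ) : ind B m i ≤ 1 := by
  unfold ind; split <;> norm_num

lemma abs_ind_sub_le_one (B : Set ℝ) (m m' i : ℕ) : |ind B m i - ind B m' i| ≤ 1 := by
  rw [abs_sub_le_iff]
  constructor <;> nlinarith [ind_nonneg B m i, ind_le_one B m i, ind_nonneg B m' i,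
    ind_le_one B m' i]

lemma cast_absdiff (n k : ℕ) : (((k-n) + (n-k) : ℕ) : ℝ) = |(k:ℝ) - (n:ℝ)| := by
  rcases le_total k n with h | h
  · have hc : (k:ℝ) ≤ n := by exact_mod_cast h
    rw [Nat.sub_eq_zero_of_le h, abs_of_nonpos (by linarith)]
    push_cast [h]
    ring
  · have hc : (n:ℝ) ≤ k := by exact_mod_cast h
    rw [Nat.sub_eq_zero_of_le h, abs_of_nonneg (by linarith)]
    push_cast [h]
    ring

open scoped Classical in
lemma d_sum_bound {B : Set ℝ} {n k : ℕ} {r ε' : ℝ} (hn : 1 ≤ n) (hr : 0 < r) (hr1 : r ≤ 1)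
    (hε' : 0 ≤ ε') (h1n : (1:ℝ)/n ≤ r)
    (hvol : volume (Metric.thickening (2*r) (frontier B)) ≤ ENNReal.ofReal ε')
    (hclose : (((k-n) + (n-k) : ℕ) : ℝ) ≤ r * n / 4) :
    ∑ i ∈ Finset.Icc 1 (max n k), |ind B n i - ind B k i|
      ≤ (n:ℝ) * ε' + (((k-n) + (n-k) : ℕ) : ℝ) := by
  have hnR : (1:ℝ) ≤ n := by exact_mod_cast hn
  have hk : 1 ≤ k := by
    by_contra hk0
    have : k = 0 := by omega
    subst this
    simp only [Nat.zero_sub, Nat.sub_zero, zero_add] at hclose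
    have : (n:ℝ) ≤ r * n / 4 := by exact_mod_cast hclose
    nlinarith
  have hkR : (1:ℝ) ≤ k := by exact_mod_cast hk
  set m := min n k with hm
  set M := max n k with hM
  have hmM : m ≤ M := min_le_max
  have h1m : 1 ≤ m := le_min hn hk
  -- the key pointwise bound on Icc 1 m
  have hmid : ∀ i ∈ Finset.Icc 1 m, |ind B n i - ind B k i|
      ≤ (if ((i:ℝ)/n) ∈ Metric.thickening r (frontier B) then (1:ℝ) else 0) := by
    intro i hi
    rw [Finset.mem_Icc] at hi
    have hin : i ≤ n := le_trans hi.2 (min_le_left _ _)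
    have hik : i ≤ k := le_trans hi.2 (min_le_right _ _)
    have hiR : (1:ℝ) ≤ i := by exact_mod_cast hi.1
    have hinR : (i:ℝ) ≤ n := by exact_mod_cast hin
    have hikR : (i:ℝ) ≤ k := by exact_mod_cast hik
    by_cases hT : ((i:ℝ)/n) ∈ Metric.thickening r (frontier B)
    · simp only [hT, if_true]
      exact abs_ind_sub_le_one B n k i
    · simp only [hT, if_false]
      -- show the two indicators agree
      have hdxy : |(i:ℝ)/n - (i:ℝ)/k| ≤ r/4 := by
        have hknR : |(k:ℝ) - (n:ℝ)| ≤ r * n / 4 := by rw [← cast_absdiff]; exact hclose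
        have heq : (i:ℝ)/n - (i:ℝ)/k = (i * ((k:ℝ) - n)) / (n * k) := by
          field_simp
        rw [heq, abs_div, abs_mul]
        rw [abs_of_nonneg (by positivity : (0:ℝ) ≤ (i:ℝ)), abs_of_nonneg (by positivity : (0:ℝ) ≤ (n:ℝ)*k)]
        rw [div_le_iff₀ (by positivity)]
        calc (i:ℝ) * |(k:ℝ) - n| ≤ (k:ℝ) * (r * n / 4) := by
              apply mul_le_mul hikR hknR (abs_nonneg _) (by positivity)
          _ ≤ r/4 * ((n:ℝ) * k) := by ring_nf; nlinarith
      have hiff : (((i:ℝ)/n) ∈ B) ↔ (((i:ℝ)/k) ∈ B) := by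
        constructor
        · intro hBn
          by_contra hBk
          obtain ⟨z, hzF, hz⟩ := frontier_cross hBn hBk
          exact hT (Metric.mem_thickening_iff.2 ⟨z, hzF, by
            rw [Real.dist_eq]; linarith [hz.trans hdxy]⟩)
        · intro hBk
          by_contra hBn
          obtain ⟨z, hzF, hz⟩ := frontier_cross hBk hBn
          refine hT (Metric.mem_thickening_iff.2 ⟨z, hzF, ?_⟩)
          have h1 : |(i:ℝ)/k - z| ≤ r/4 := by
            have : |(i:ℝ)/k - (i:ℝ)/n| = |(i:ℝ)/n - (i:ℝ)/k| := abs_sub_comm _ _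
            linarith [hz.trans (le_of_eq this), hdxy]
          have h2 : |(i:ℝ)/n - z| ≤ |(i:ℝ)/n - (i:ℝ)/k| + |(i:ℝ)/k - z| := abs_sub_le _ _ _
          rw [Real.dist_eq]
          linarith
      have : ind B n i = ind B k i := by
        unfold ind
        by_cases hBn : ((i:ℝ)/n) ∈ B
        · rw [if_pos ⟨hin, hBn⟩, if_pos ⟨hik, hiff.1 hBn⟩]
        · rw [if_neg (fun h => hBn h.2), if_neg (fun h => hBn (hiff.2 h.2))]
      rw [this, sub_self, abs_zero]
  -- split the sum
  have hsplit : Finset.Icc 1 M = Finset.Icc 1 m ∪ Finset.Ioc m M := by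
    ext i
    simp only [Finset.mem_Icc, Finset.mem_Ioc, Finset.mem_union]
    omega
  have hdisj : Disjoint (Finset.Icc 1 m) (Finset.Ioc m M) := by
    rw [Finset.disjoint_left]
    intro i hi hi'
    rw [Finset.mem_Icc] at hi
    rw [Finset.mem_Ioc] at hi'
    omega
  rw [hsplit, Finset.sum_union hdisj]
  have hbound1 : ∑ i ∈ Finset.Icc 1 m, |ind B n i - ind B k i| ≤ (n:ℝ) * ε' := by
    calc ∑ i ∈ Finset.Icc 1 m, |ind B n i - ind B k i|
        ≤ ∑ i ∈ Finset.Icc 1 m,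
            (if ((i:ℝ)/n) ∈ Metric.thickening r (frontier B) then (1:ℝ) else 0) :=
          Finset.sum_le_sum hmid
      _ = (((Finset.Icc 1 m).filter
            (fun i : ℕ => ((i:ℝ)/n) ∈ Metric.thickening r (frontier B))).card : ℝ) := by
          rw [Finset.sum_boole]
      _ ≤ (((Finset.Icc 1 n).filter
            (fun i : ℕ => ((i:ℝ)/n) ∈ Metric.thickening r (frontier B))).card : ℝ) := by
          apply Nat.cast_le.2
          apply Finset.card_le_card
          apply Finset.filter_subset_filter
          apply Finset.Icc_subset_Icc le_rfl (min_le_left _ _)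
      _ ≤ (n:ℝ) * ε' := grid_count hn hε' h1n hvol
  have hbound2 : ∑ i ∈ Finset.Ioc m M, |ind B n i - ind B k i|
      ≤ (((k-n) + (n-k) : ℕ) : ℝ) := by
    calc ∑ i ∈ Finset.Ioc m M, |ind B n i - ind B k i|
        ≤ ∑ _i ∈ Finset.Ioc m M, (1:ℝ) :=
          Finset.sum_le_sum (fun i _ => abs_ind_sub_le_one B n k i)
      _ = ((Finset.Ioc m M).card : ℝ) := by simp
      _ = (((k-n) + (n-k) : ℕ) : ℝ) := by
          rw [Nat.card_Ioc]
          congr 1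
          omega
  linarith

lemma poisson_V (n : ℕ) :
    ∑' k : ℕ, ENNReal.ofReal (Real.exp (-(n:ℝ)) * (n:ℝ) ^ k / (Nat.factorial k))
        * ((((k-n) + (n-k) : ℕ) : ℝ≥0∞))^2 = ENNReal.ofReal (n:ℝ) := by
  have hterm : ∀ k : ℕ,
      ENNReal.ofReal (Real.exp (-(n:ℝ)) * (n:ℝ) ^ k / (Nat.factorial k))
          * ((((k-n) + (n-k) : ℕ) : ℝ≥0∞))^2
        = ENNReal.ofReal ((Real.exp (-(n:ℝ)) * (n:ℝ) ^ k / (Nat.factorial k))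
            * (((k:ℝ) - (n:ℝ))^2)) := by
    intro k
    have h0 : (0:ℝ) ≤ Real.exp (-(n:ℝ)) * (n:ℝ) ^ k / (Nat.factorial k) := by positivity
    rw [ENNReal.ofReal_mul h0]
    congr 1
    rw [← ENNReal.ofReal_natCast, ← ENNReal.ofReal_pow (Nat.cast_nonneg _)]
    congr 1
    rw [cast_absdiff n k, sq_abs]
  simp only [hterm]
  rw [← ENNReal.ofReal_tsum_of_nonneg (fun k => by positivity) (summable_var (n:ℝ))]
  rw [poisson_var (n:ℝ)]

end DePoisAux

open DePoisAux

set_option maxHeartbeats 2000000 in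
/-- de-Poissonization.  If `(ξ_i)` are i.i.d. nonnegative with
`E[ξ₁] ≤ C/n` (the law may depend on `n`), `N_n` is Poisson of mean `n`
independent of the sequence, and `B ⊆ [0,1]` has null boundary and satisfies the
uniform Riemann approximation property, then
`E[|∑_{i=1}^n 1{i/n ∈ B} ξ_i − ∑_{i=1}^{N_n} 1{i/N_n ∈ B} ξ_i|] → 0`. -/
theorem dePoissonization {Ω : Type*} [MeasurableSpace Ω]
    (P : Measure Ω) [IsProbabilityMeasure P]
    (ξ : ℕ → ℕ → Ω → ℝ) (hmeas : ∀ n i, Measurable (ξ n i))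
    (hnonneg : ∀ n i ω, 0 ≤ ξ n i ω)
    (hiid : ∀ n, iIndepFun (fun i => ξ n i) P)
    (hident : ∀ n i, IdentDistrib (ξ n i) (ξ n 1) P P)
    (C : ℝ) (hmean : ∀ n : ℕ, 1 ≤ n → ∫ ω, ξ n 1 ω ∂P ≤ C / n)
    (N : ℕ → Ω → ℕ) (hNmeas : ∀ n, Measurable (N n))
    (hPois : ∀ n k : ℕ,
      P {ω | N n ω = k} =
        ENNReal.ofReal (Real.exp (-(n:ℝ)) * (n:ℝ) ^ k / (Nat.factorial k)))
    (hNindep : ∀ n, IndepFun (N n) (fun ω => (fun i => ξ n i ω : ℕ → ℝ)) P)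
    (B : Set ℝ) (hBsub : B ⊆ Set.Icc (0:ℝ) 1) (hBmeas : MeasurableSet B)
    (hBbdry : volume (frontier B) = 0)
    (hRiemann : ∀ ε : ℝ, 0 < ε → ∃ N₀ : ℕ, ∀ m : ℕ, N₀ ≤ m →
      |(volume B).toReal -
          (m:ℝ)⁻¹ * ({i : ℕ | i ∈ Finset.Icc 1 m ∧ ((i:ℝ) / m) ∈ B}.ncard : ℝ)| ≤ ε) :
    Tendsto
      (fun n : ℕ =>
        ∫ ω,
          |(∑ i ∈ Finset.Icc 1 n, Set.indicator B (fun _ => ξ n i ω) ((i:ℝ) / n)) -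
            ∑ i ∈ Finset.Icc 1 (N n ω),
              Set.indicator B (fun _ => ξ n i ω) ((i:ℝ) / (N n ω))| ∂P)
      atTop (nhds 0) := by
  classical
  set C' := max C 0 with hC'def
  have hC'0 : 0 ≤ C' := le_max_right _ _
  rw [NormedAddCommGroup.tendsto_nhds_zero]
  intro ε hε
  set ε' := ε / (2 * (C' + 1)) with hε'def
  have hε' : 0 < ε' := by positivity
  -- choose r
  obtain ⟨r, hr0, hr1, hvol⟩ : ∃ r : ℝ, 0 < r ∧ r ≤ 1 ∧
      volume (Metric.thickening (2*r) (frontier B)) ≤ ENNReal.ofReal ε' := by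
    have hfin : volume (Metric.thickening 1 (frontier B)) ≠ ∞ := by
      have hsub : Metric.thickening 1 (frontier B) ⊆ Set.Icc (-1:ℝ) 2 := by
        intro x hx
        obtain ⟨z, hzF, hdz⟩ := Metric.mem_thickening_iff.1 hx
        have hz : z ∈ Set.Icc (0:ℝ) 1 := by
          have h2 : closure B ⊆ Set.Icc (0:ℝ) 1 := closure_minimal hBsub isClosed_Icc
          exact h2 (frontier_subset_closure hzF)
        rw [Real.dist_eq, abs_sub_lt_iff] at hdz
        constructor
        · linarith [hz.1, hdz.1, hdz.2]
        · linarith [hz.2, hdz.1, hdz.2]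
      refine ne_of_lt (lt_of_le_of_lt (measure_mono hsub) ?_)
      rw [Real.volume_Icc]
      exact ENNReal.ofReal_lt_top
    have htend := tendsto_measure_thickening_of_isClosed (μ := volume)
      ⟨1, one_pos, hfin⟩ isClosed_frontier
    rw [hBbdry] at htend
    have hev : ∀ᶠ δ in nhdsWithin (0:ℝ) (Set.Ioi 0),
        volume (Metric.thickening δ (frontier B)) < ENNReal.ofReal ε' :=
      htend.eventually_lt_const (by simp [ENNReal.ofReal_pos, hε'])
    obtain ⟨δ, hδv, hδ0⟩ := (hev.and self_mem_nhdsWithin).exists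
    have hδ0' : 0 < δ := hδ0
    refine ⟨min (δ/2) 1, lt_min (by linarith) one_pos, min_le_right _ _, ?_⟩
    refine le_trans (measure_mono (Metric.thickening_mono ?_ _)) hδv.le
    have := min_le_left (δ/2) 1
    linarith
  -- the dominating sequence
  set b : ℕ → ℝ := fun n => C' * ε' + 3 * C' / Real.sqrt n + (128 * C' / r^2) / n with hbdef
  have hbn0 : ∀ n : ℕ, 1 ≤ n → 0 ≤ b n := by
    intro n hn
    have h1 : (0:ℝ) < n := by exact_mod_cast hn
    have h2 : (0:ℝ) < Real.sqrt n := Real.sqrt_pos.2 h1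
    have h3 : (0:ℝ) ≤ C' * ε' := mul_nonneg hC'0 hε'.le
    have h4 : (0:ℝ) ≤ 3 * C' / Real.sqrt n := by positivity
    have h5 : (0:ℝ) ≤ 128 * C' / r^2 / n := by positivity
    rw [hbdef]
    dsimp only
    linarith
  have hbtend : Tendsto b atTop (𝓝 (C' * ε')) := by
    have hsq : Tendsto Real.sqrt atTop atTop := by
      refine tendsto_atTop_atTop.2 (fun c => ⟨max (c^2) 0, fun x hx => ?_⟩)
      rcases le_total c 0 with h | h
      · exact le_trans h (Real.sqrt_nonneg x)
      · have hx2 : c^2 ≤ x := le_trans (le_max_left _ _) hx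
        calc c = Real.sqrt (c^2) := (Real.sqrt_sq h).symm
          _ ≤ Real.sqrt x := Real.sqrt_le_sqrt hx2
    have h1 : Tendsto (fun n : ℕ => 3 * C' / Real.sqrt n) atTop (𝓝 0) := by
      apply Tendsto.div_atTop (tendsto_const_nhds)
      exact hsq.comp tendsto_natCast_atTop_atTop
    have h2 : Tendsto (fun n : ℕ => (128 * C' / r^2) / (n:ℝ)) atTop (𝓝 0) := by
      apply Tendsto.div_atTop (tendsto_const_nhds)
      exact tendsto_natCast_atTop_atTop
    have hadd := ((tendsto_const_nhds (x := C' * ε') (f := atTop (α := ℕ))).add h1).add h2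
    simpa using hadd
  have hblt : C' * ε' < ε := by
    have h1 : 0 < 2 * (C' + 1) := by positivity
    rw [hε'def, mul_div_assoc', div_lt_iff₀ h1]
    nlinarith
  have hbev : ∀ᶠ n : ℕ in atTop, b n < ε := hbtend.eventually_lt_const hblt
  have h1r : ∀ᶠ n : ℕ in atTop, (1:ℝ)/n ≤ r := by
    have := tendsto_one_div_atTop_nhds_zero_nat.eventually_le_const hr0
    exact this
  -- the key per-n bound
  have key : ∀ n : ℕ, 1 ≤ n → (1:ℝ)/n ≤ r →
      (∫ ω, |(∑ i ∈ Finset.Icc 1 n, Set.indicator B (fun _ => ξ n i ω) ((i:ℝ) / n)) -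
            ∑ i ∈ Finset.Icc 1 (N n ω),
              Set.indicator B (fun _ => ξ n i ω) ((i:ℝ) / (N n ω))| ∂P) ≤ b n := by
    intro n hn1 h1n
    have hnR : (1:ℝ) ≤ n := by exact_mod_cast hn1
    have hnpos : (0:ℝ) < n := by linarith
    set S : ℕ → Ω → ℝ :=
      fun m ω => ∑ i ∈ Finset.Icc 1 m, Set.indicator B (fun _ => ξ n i ω) ((i:ℝ)/m) with hSdef
    have hSmeas : ∀ m, Measurable (S m) := by
      intro m
      apply Finset.measurable_sum
      intro i _
      by_cases hiB : ((i:ℝ)/m) ∈ B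
      · simpa only [Set.indicator_of_mem hiB] using hmeas n i
      · simp only [Set.indicator_of_notMem hiB]
        exact measurable_const
    have hGmeas : Measurable (fun ω => |S n ω - S (N n ω) ω|) := by
      have h1 : Measurable (fun p : Ω × ℕ => S n p.1 - S p.2 p.1) :=
        measurable_from_prod_countable_left (fun k => (hSmeas n).sub (hSmeas k))
      exact (h1.comp (measurable_id.prodMk (hNmeas n))).abs
    have hSnonneg : ∀ m ω, 0 ≤ S m ω := by
      intro m ω
      apply Finset.sum_nonneg
      intro i _
      exact Set.indicator_apply_nonneg (fun _ => hnonneg n i ω)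
    set L := ∫⁻ ω, ENNReal.ofReal (|S n ω - S (N n ω) ω|) ∂P with hLdef
    have hIeq : (∫ ω, |S n ω - S (N n ω) ω| ∂P) = L.toReal :=
      integral_eq_lintegral_of_nonneg_ae (ae_of_all _ fun ω => abs_nonneg _)
        hGmeas.aestronglyMeasurable
    show (∫ ω, |S n ω - S (N n ω) ω| ∂P) ≤ b n
    rw [hIeq]
    set Exi := ∫⁻ ω, ENNReal.ofReal (ξ n 1 ω) ∂P with hExidef
    -- events
    set sk : ℕ → Set Ω := fun k => {ω | N n ω = k} with hskdef
    have hskm : ∀ k, MeasurableSet (sk k) := by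
      intro k
      have : sk k = N n ⁻¹' {k} := by ext ω; simp [hskdef]
      rw [this]
      exact (hNmeas n) (measurableSet_singleton k)
    have hskd : Pairwise (Function.onFun Disjoint sk) := by
      intro j k hjk
      rw [Function.onFun, Set.disjoint_left]
      intro ω h1 h2
      exact hjk (h1.symm.trans h2)
    have hskU : (⋃ k, sk k) = Set.univ := by
      ext ω; simp [hskdef]
    have hpk : ∀ k, P (sk k) =
        ENNReal.ofReal (Real.exp (-(n:ℝ)) * (n:ℝ) ^ k / (Nat.factorial k)) := fun k => hPois n k
    have hpkpos : ∀ k, P (sk k) ≠ 0 := by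
      intro k
      rw [hpk k]
      apply ne_of_gt
      rw [ENNReal.ofReal_pos]
      have : (0:ℝ) < (n:ℝ)^k := by positivity
      positivity
    -- independence key identity
    have hxivec : Measurable (fun ω => (fun i => ξ n i ω : ℕ → ℝ)) :=
      measurable_pi_lambda _ (fun i => hmeas n i)
    have hkey : ∀ k i : ℕ, (∫⁻ ω in sk k, ENNReal.ofReal (ξ n i ω) ∂P)
        = P (sk k) * Exi := by
      intro k i
      rw [← lintegral_indicator (hskm k)]
      have heq : (fun ω => Set.indicator (sk k) (fun ω' => ENNReal.ofReal (ξ n i ω')) ω)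
          = fun ω =>
            ((fun m : ℕ => Set.indicator ({k} : Set ℕ) (fun _ => (1:ℝ≥0∞)) m) ∘ (N n)) ω *
            ((fun v : ℕ → ℝ => ENNReal.ofReal (v i)) ∘ (fun ω' => (fun j => ξ n j ω'))) ω := by
        funext ω
        by_cases h : N n ω = k
        · have hω : ω ∈ sk k := h
          simp only [Set.indicator_of_mem hω, Function.comp_apply, h,
            Set.indicator_of_mem (Set.mem_singleton k), one_mul]
        · have hω : ω ∉ sk k := h
          have hk' : N n ω ∉ ({k} : Set ℕ) := h
          simp only [Set.indicator_of_notMem hω, Function.comp_apply,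
            Set.indicator_of_notMem hk', zero_mul]
      rw [heq]
      have hmf : Measurable (fun m : ℕ => Set.indicator ({k} : Set ℕ) (fun _ => (1:ℝ≥0∞)) m) :=
        measurable_from_top
      have hmg : Measurable (fun v : ℕ → ℝ => ENNReal.ofReal (v i)) :=
        ENNReal.measurable_ofReal.comp (measurable_pi_apply i)
      have hindep := (hNindep n).comp hmf hmg
      rw [lintegral_mul_eq_lintegral_mul_lintegral_of_indepFun'' (hmf.comp (hNmeas n)).aemeasurable
        (hmg.comp hxivec).aemeasurable hindep]
      congr 1
      · have heq2 : (fun ω => ((fun m : ℕ =>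
            Set.indicator ({k} : Set ℕ) (fun _ => (1:ℝ≥0∞)) m) ∘ (N n)) ω)
            = fun ω => Set.indicator (sk k) (fun _ => (1:ℝ≥0∞)) ω := by
          funext ω
          by_cases h : N n ω = k
          · have hω : ω ∈ sk k := h
            simp only [Function.comp_apply, h, Set.indicator_of_mem (Set.mem_singleton k),
              Set.indicator_of_mem hω]
          · have hω : ω ∉ sk k := h
            have hk' : N n ω ∉ ({k} : Set ℕ) := h
            simp only [Function.comp_apply, Set.indicator_of_notMem hk',
              Set.indicator_of_notMem hω]
        rw [heq2]
        exact lintegral_indicator_one (hskm k)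
      · exact ((hident n i).comp ENNReal.measurable_ofReal).lintegral_eq
    -- sum representation
    have hSrep : ∀ (m M : ℕ), m ≤ M → ∀ ω,
        S m ω = ∑ i ∈ Finset.Icc 1 M, ind B m i * ξ n i ω := by
      intro m M hmM ω
      rw [hSdef]
      dsimp only
      trans (∑ i ∈ Finset.Icc 1 m, ind B m i * ξ n i ω)
      · apply Finset.sum_congr rfl
        intro i hi
        rw [Finset.mem_Icc] at hi
        unfold ind
        by_cases hiB : ((i:ℝ)/m) ∈ B
        · rw [Set.indicator_of_mem hiB, if_pos ⟨hi.2, hiB⟩, one_mul]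
        · rw [Set.indicator_of_notMem hiB, if_neg (fun h => hiB h.2), zero_mul]
      · apply Finset.sum_subset (Finset.Icc_subset_Icc le_rfl hmM)
        intro i hi hnot
        rw [Finset.mem_Icc] at hi hnot
        unfold ind
        rw [if_neg, zero_mul]
        rintro ⟨h1, _⟩
        exact hnot ⟨hi.1, h1⟩
    -- the nonintegrable case
    rcases eq_or_ne Exi ∞ with hE | hE
    · -- show L.toReal = 0 or integrand ≡ 0
      have hLlow : ∀ (k i₀ : ℕ), (∀ ω, ω ∈ sk k → ξ n i₀ ω ≤ |S n ω - S (N n ω) ω|) →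
          L = ∞ := by
        intro k i₀ hle
        have h1 : (∫⁻ ω in sk k, ENNReal.ofReal (ξ n i₀ ω) ∂P) ≤ L := by
          refine le_trans (setLIntegral_mono hGmeas.ennreal_ofReal ?_)
            (setLIntegral_le_lintegral _ _)
          intro ω hω
          exact ENNReal.ofReal_le_ofReal (hle ω hω)
        rw [hkey k i₀, hE, ENNReal.mul_top (hpkpos k)] at h1
        exact top_le_iff.1 h1
      by_cases hall : ∀ (m i : ℕ), i ∈ Finset.Icc 1 m → ((i:ℝ)/m) ∉ B
      · have hzero : ∀ m ω, S m ω = 0 := by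
          intro m ω
          rw [hSdef]
          dsimp only
          apply Finset.sum_eq_zero
          intro i hi
          exact Set.indicator_of_notMem (hall m i hi) _
        have : ∀ ω, |S n ω - S (N n ω) ω| = 0 := by
          intro ω
          rw [hzero n ω, hzero (N n ω) ω, sub_zero, abs_zero]
        rw [hLdef]
        simp only [this, ENNReal.ofReal_zero, lintegral_zero, ENNReal.toReal_zero]
        exact hbn0 n hn1
      · push_neg at hall
        obtain ⟨k0, i₀, hi₀, hi₀B⟩ := hall
        have hsingle : ∀ (m j : ℕ) (ω : Ω), j ∈ Finset.Icc 1 m → ((j:ℝ)/m) ∈ B →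
            ξ n j ω ≤ S m ω := by
          intro m j ω him hBm
          rw [hSdef]
          dsimp only
          have hss := Finset.single_le_sum
            (f := fun i => Set.indicator B (fun _ => ξ n i ω) ((i:ℝ)/m))
            (fun i _ => Set.indicator_apply_nonneg (fun _ => hnonneg n i ω)) him
          simpa [Set.indicator_of_mem hBm] using hss
        have hLtop : L = ∞ := by
          by_cases hBn : ∃ j ∈ Finset.Icc 1 n, ((j:ℝ)/n) ∈ B
          · obtain ⟨j, hj, hjB⟩ := hBn
            refine hLlow 0 j ?_
            intro ω hω
            have hN0 : N n ω = 0 := hω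
            have hS0 : S (N n ω) ω = 0 := by
              rw [hN0, hSdef]
              simp
            rw [hS0, sub_zero, abs_of_nonneg (hSnonneg n ω)]
            exact hsingle n j ω hj hjB
          · push_neg at hBn
            refine hLlow k0 i₀ ?_
            intro ω hω
            have hNk : N n ω = k0 := hω
            have hSn0 : S n ω = 0 := by
              rw [hSdef]
              dsimp only
              apply Finset.sum_eq_zero
              intro j hj
              exact Set.indicator_of_notMem (hBn j hj) _
            rw [hSn0, zero_sub, abs_neg, hNk, abs_of_nonneg (hSnonneg k0 ω)]
            exact hsingle k0 i₀ ω hi₀ hi₀B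
        rw [hLtop]
        simp only [ENNReal.toReal_top]
        exact hbn0 n hn1
    -- the integrable case
    · have hint : Integrable (ξ n 1) P := by
        refine ⟨(hmeas n 1).aestronglyMeasurable, ?_⟩
        rw [hasFiniteIntegral_iff_norm]
        have : (fun ω => ENNReal.ofReal ‖ξ n 1 ω‖) = fun ω => ENNReal.ofReal (ξ n 1 ω) := by
          funext ω
          rw [Real.norm_of_nonneg (hnonneg n 1 ω)]
        rw [this]
        exact lt_of_le_of_ne le_top hE
      have hEle : Exi ≤ ENNReal.ofReal (C'/n) := by
        have h1 : ENNReal.ofReal (∫ ω, ξ n 1 ω ∂P) = Exi :=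
          ofReal_integral_eq_lintegral_ofReal hint (ae_of_all _ (hnonneg n 1))
        rw [← h1]
        apply ENNReal.ofReal_le_ofReal
        refine le_trans (hmean n hn1) ?_
        gcongr
        exact le_max_left C 0
      -- partition of L
      have hLsum : L = ∑' k, ∫⁻ ω in sk k, ENNReal.ofReal (|S n ω - S (N n ω) ω|) ∂P := by
        rw [hLdef, ← setLIntegral_univ, ← hskU, lintegral_iUnion hskm hskd]
      -- abbreviations
      set a : ℕ → ℕ := fun k => (k - n) + (n - k) with hadef
      set D : ℕ → ℝ≥0∞ :=
        fun k => ∑ i ∈ Finset.Icc 1 (max n k), ENNReal.ofReal (|ind B n i - ind B k i|)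
        with hDdef
      have hpiece : ∀ k, (∫⁻ ω in sk k, ENNReal.ofReal (|S n ω - S (N n ω) ω|) ∂P)
          ≤ P (sk k) * (D k * Exi) := by
        intro k
        have hpt : ∀ ω ∈ sk k, ENNReal.ofReal (|S n ω - S (N n ω) ω|)
            ≤ ∑ i ∈ Finset.Icc 1 (max n k),
                ENNReal.ofReal (|ind B n i - ind B k i|) * ENNReal.ofReal (ξ n i ω) := by
          intro ω hω
          have hNk : N n ω = k := hω
          rw [hNk]
          have h1 : |S n ω - S k ω| ≤
              ∑ i ∈ Finset.Icc 1 (max n k), |ind B n i - ind B k i| * ξ n i ω := by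
            rw [hSrep n (max n k) (le_max_left _ _) ω, hSrep k (max n k) (le_max_right _ _) ω,
              ← Finset.sum_sub_distrib]
            refine (Finset.abs_sum_le_sum_abs _ _).trans ?_
            apply Finset.sum_le_sum
            intro i _
            rw [← sub_mul, abs_mul, abs_of_nonneg (hnonneg n i ω)]
          calc ENNReal.ofReal (|S n ω - S k ω|)
              ≤ ENNReal.ofReal (∑ i ∈ Finset.Icc 1 (max n k),
                  |ind B n i - ind B k i| * ξ n i ω) := ENNReal.ofReal_le_ofReal h1
            _ = ∑ i ∈ Finset.Icc 1 (max n k),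
                  ENNReal.ofReal (|ind B n i - ind B k i| * ξ n i ω) :=
                ENNReal.ofReal_sum_of_nonneg
                  (fun i _ => mul_nonneg (abs_nonneg _) (hnonneg n i ω))
            _ = ∑ i ∈ Finset.Icc 1 (max n k),
                  ENNReal.ofReal (|ind B n i - ind B k i|) * ENNReal.ofReal (ξ n i ω) := by
                apply Finset.sum_congr rfl
                intro i _
                rw [ENNReal.ofReal_mul (abs_nonneg _)]
        calc (∫⁻ ω in sk k, ENNReal.ofReal (|S n ω - S (N n ω) ω|) ∂P)
            ≤ ∫⁻ ω in sk k, (∑ i ∈ Finset.Icc 1 (max n k),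
                ENNReal.ofReal (|ind B n i - ind B k i|) * ENNReal.ofReal (ξ n i ω)) ∂P := by
              apply setLIntegral_mono
              · apply Finset.measurable_sum
                intro i _
                exact (hmeas n i).ennreal_ofReal.const_mul _
              · exact hpt
          _ = ∑ i ∈ Finset.Icc 1 (max n k),
                ∫⁻ ω in sk k, ENNReal.ofReal (|ind B n i - ind B k i|)
                  * ENNReal.ofReal (ξ n i ω) ∂P := by
              apply lintegral_finset_sum
              intro i _
              exact (hmeas n i).ennreal_ofReal.const_mul _
          _ = ∑ i ∈ Finset.Icc 1 (max n k),
                ENNReal.ofReal (|ind B n i - ind B k i|) *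
                  (∫⁻ ω in sk k, ENNReal.ofReal (ξ n i ω) ∂P) := by
              apply Finset.sum_congr rfl
              intro i _
              rw [lintegral_const_mul _ (hmeas n i).ennreal_ofReal]
          _ = ∑ i ∈ Finset.Icc 1 (max n k),
                ENNReal.ofReal (|ind B n i - ind B k i|) * (P (sk k) * Exi) := by
              apply Finset.sum_congr rfl
              intro i _
              rw [hkey k i]
          _ = P (sk k) * (D k * Exi) := by
              rw [hDdef, ← Finset.sum_mul]
              ring
      -- counting bound per k
      set χ : ℕ → ℝ≥0∞ := fun k => if ((a k : ℝ) ≤ r * n / 4) then 0 else 1 with hχdef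
      have hD : ∀ k, D k ≤ ENNReal.ofReal ((n:ℝ) * ε') + (a k : ℝ≥0∞)
          + 2 * (n : ℝ≥0∞) * χ k := by
        intro k
        by_cases hgood : (a k : ℝ) ≤ r * n / 4
        · have h1 := d_sum_bound (B := B) hn1 hr0 hr1 hε'.le h1n hvol hgood
          have h2 : D k ≤ ENNReal.ofReal ((n:ℝ) * ε' + (a k : ℝ)) := by
            rw [hDdef]
            dsimp only
            rw [← ENNReal.ofReal_sum_of_nonneg (fun i _ => abs_nonneg _)]
            exact ENNReal.ofReal_le_ofReal h1
          refine le_trans h2 ?_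
          rw [ENNReal.ofReal_add (by positivity) (Nat.cast_nonneg _), ENNReal.ofReal_natCast]
          rw [hχdef]
          simp only [hgood, if_true, mul_zero, add_zero]
          exact le_rfl
        · have h1 : D k ≤ ((max n k : ℕ) : ℝ≥0∞) := by
            rw [hDdef]
            dsimp only
            calc ∑ i ∈ Finset.Icc 1 (max n k), ENNReal.ofReal (|ind B n i - ind B k i|)
                ≤ ∑ _i ∈ Finset.Icc 1 (max n k), 1 :=
                  Finset.sum_le_sum (fun i _ =>
                    ENNReal.ofReal_le_one.2 (abs_ind_sub_le_one B n k i))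
              _ = ((Finset.Icc 1 (max n k)).card : ℝ≥0∞) := by simp
              _ = ((max n k : ℕ) : ℝ≥0∞) := by rw [Nat.card_Icc]; norm_num
          have h2 : (max n k) ≤ n + a k := by
            rw [hadef]
            dsimp only
            omega
          refine le_trans h1 ?_
          have h3 : ((max n k : ℕ) : ℝ≥0∞) ≤ (n : ℝ≥0∞) + (a k : ℝ≥0∞) := by
            rw [← Nat.cast_add]
            exact_mod_cast Nat.cast_le.2 h2
          refine le_trans h3 ?_
          rw [hχdef]
          simp only [hgood, if_false, mul_one]
          calc (n : ℝ≥0∞) + (a k : ℝ≥0∞)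
              ≤ ((a k : ℝ≥0∞) + 2 * (n : ℝ≥0∞)) := by
                rw [add_comm]
                apply add_le_add le_rfl
                rw [two_mul]
                exact le_self_add
            _ ≤ ENNReal.ofReal ((n:ℝ) * ε') + ((a k : ℝ≥0∞) + 2 * (n : ℝ≥0∞)) := le_add_self
            _ = ENNReal.ofReal ((n:ℝ) * ε') + (a k : ℝ≥0∞) + 2 * (n : ℝ≥0∞) := by
                rw [add_assoc]
      -- variance fact
      have hV : ∑' k, P (sk k) * ((a k : ℝ≥0∞))^2 = ENNReal.ofReal (n:ℝ) := by
        have : ∀ k, P (sk k) * ((a k : ℝ≥0∞))^2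
            = ENNReal.ofReal (Real.exp (-(n:ℝ)) * (n:ℝ) ^ k / (Nat.factorial k))
                * ((((k-n) + (n-k) : ℕ) : ℝ≥0∞))^2 := by
          intro k
          rw [hpk k, hadef]
        simp only [this]
        exact poisson_V n
      have hp1 : ∑' k, P (sk k) = 1 := by
        rw [← measure_iUnion hskd hskm, hskU, measure_univ]
      -- Σ A bound
      set T := ENNReal.ofReal (Real.sqrt n) with hTdef
      have hsqrtpos : (0:ℝ) < Real.sqrt n := Real.sqrt_pos.2 hnpos
      have hT0 : T ≠ 0 := by
        rw [hTdef]
        simp only [ne_eq, ENNReal.ofReal_eq_zero, not_le]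
        exact hsqrtpos
      have hTtop : T ≠ ∞ := ENNReal.ofReal_ne_top
      have hAptw : ∀ k, (a k : ℝ≥0∞) ≤ T + (a k : ℝ≥0∞)^2 / T := by
        intro k
        by_cases hak : (a k : ℝ≥0∞) ≤ T
        · exact le_trans hak le_self_add
        · push_neg at hak
          have h1 : (a k : ℝ≥0∞) ≤ (a k : ℝ≥0∞)^2 / T := by
            rw [ENNReal.le_div_iff_mul_le (Or.inl hT0) (Or.inl hTtop), sq]
            exact mul_le_mul' le_rfl hak.le
          exact le_trans h1 le_add_self
      have hSA : ∑' k, P (sk k) * (a k : ℝ≥0∞) ≤ ENNReal.ofReal (2 * Real.sqrt n) := by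
        calc ∑' k, P (sk k) * (a k : ℝ≥0∞)
            ≤ ∑' k, P (sk k) * (T + (a k : ℝ≥0∞)^2 / T) :=
              ENNReal.tsum_le_tsum (fun k => mul_le_mul' le_rfl (hAptw k))
          _ = (∑' k, P (sk k) * T) + ∑' k, P (sk k) * ((a k : ℝ≥0∞)^2 / T) := by
              rw [← ENNReal.tsum_add]
              apply tsum_congr
              intro k
              rw [mul_add]
          _ = T + (ENNReal.ofReal (n:ℝ)) / T := by
              congr 1
              · rw [ENNReal.tsum_mul_right, hp1, one_mul]
              · rw [← hV]
                calc ∑' k, P (sk k) * ((a k : ℝ≥0∞)^2 / T)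
                    = ∑' k, T⁻¹ * (P (sk k) * (a k : ℝ≥0∞)^2) := by
                      apply tsum_congr
                      intro k
                      rw [ENNReal.div_eq_inv_mul]
                      ring
                  _ = T⁻¹ * ∑' k, P (sk k) * (a k : ℝ≥0∞)^2 := ENNReal.tsum_mul_left
                  _ = (∑' k, P (sk k) * (a k : ℝ≥0∞)^2) / T := by
                      rw [ENNReal.div_eq_inv_mul]
          _ = ENNReal.ofReal (Real.sqrt n) + ENNReal.ofReal (Real.sqrt n) := by
              congr 1
              rw [hTdef, ← ENNReal.ofReal_div_of_pos hsqrtpos, Real.div_sqrt]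
          _ = ENNReal.ofReal (2 * Real.sqrt n) := by
              rw [← ENNReal.ofReal_add hsqrtpos.le hsqrtpos.le]
              congr 1
              ring
      -- Σ χ bound
      have hc0 : (0:ℝ) < (r * n / 4)^2 := by positivity
      have hχptw : ∀ k, χ k ≤ (a k : ℝ≥0∞)^2 / ENNReal.ofReal ((r * n / 4)^2) := by
        intro k
        rw [hχdef]
        dsimp only
        by_cases hgood : (a k : ℝ) ≤ r * n / 4
        · simp only [hgood, if_true]
          exact zero_le
        · simp only [hgood, if_false]
          push_neg at hgood
          rw [ENNReal.le_div_iff_mul_le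
            (Or.inl (by simp only [ne_eq, ENNReal.ofReal_eq_zero, not_le]; exact hc0))
            (Or.inl ENNReal.ofReal_ne_top), one_mul]
          have : ((a k : ℝ≥0∞))^2 = ENNReal.ofReal ((a k : ℝ)^2) := by
            rw [← ENNReal.ofReal_natCast, ← ENNReal.ofReal_pow (Nat.cast_nonneg _)]
          rw [this]
          apply ENNReal.ofReal_le_ofReal
          apply pow_le_pow_left₀ (by positivity) hgood.le
      have hSχ : ∑' k, P (sk k) * χ k ≤ ENNReal.ofReal (16 / (r^2 * n)) := by
        calc ∑' k, P (sk k) * χ k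
            ≤ ∑' k, P (sk k) * ((a k : ℝ≥0∞)^2 / ENNReal.ofReal ((r * n / 4)^2)) :=
              ENNReal.tsum_le_tsum (fun k => mul_le_mul' le_rfl (hχptw k))
          _ = (ENNReal.ofReal (n:ℝ)) / ENNReal.ofReal ((r * n / 4)^2) := by
              rw [← hV]
              calc ∑' k, P (sk k) * ((a k : ℝ≥0∞)^2 / ENNReal.ofReal ((r * n / 4)^2))
                  = ∑' k, (ENNReal.ofReal ((r * n / 4)^2))⁻¹ * (P (sk k) * (a k : ℝ≥0∞)^2) := by
                    apply tsum_congr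
                    intro k
                    rw [ENNReal.div_eq_inv_mul]
                    ring
                _ = (ENNReal.ofReal ((r * n / 4)^2))⁻¹ *
                      ∑' k, P (sk k) * (a k : ℝ≥0∞)^2 := ENNReal.tsum_mul_left
                _ = (∑' k, P (sk k) * (a k : ℝ≥0∞)^2) / ENNReal.ofReal ((r * n / 4)^2) := by
                    rw [ENNReal.div_eq_inv_mul]
          _ = ENNReal.ofReal ((n:ℝ) / (r * n / 4)^2) := by
              rw [ENNReal.ofReal_div_of_pos hc0]
          _ = ENNReal.ofReal (16 / (r^2 * n)) := by
              congr 1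
              field_simp
              ring
      -- assemble
      have hLle : L ≤ (∑' k, P (sk k) * (ENNReal.ofReal ((n:ℝ) * ε') + (a k : ℝ≥0∞)
          + 2 * (n : ℝ≥0∞) * χ k)) * Exi := by
        rw [hLsum, ← ENNReal.tsum_mul_right]
        apply ENNReal.tsum_le_tsum
        intro k
        refine le_trans (hpiece k) ?_
        rw [mul_assoc]
        exact mul_le_mul' le_rfl (mul_le_mul' (hD k) le_rfl)
      have hsumX : (∑' k, P (sk k) * (ENNReal.ofReal ((n:ℝ) * ε') + (a k : ℝ≥0∞)
          + 2 * (n : ℝ≥0∞) * χ k))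
          ≤ ENNReal.ofReal ((n:ℝ) * ε' + 2 * Real.sqrt n + 32 / r^2) := by
        calc (∑' k, P (sk k) * (ENNReal.ofReal ((n:ℝ) * ε') + (a k : ℝ≥0∞)
              + 2 * (n : ℝ≥0∞) * χ k))
            = (∑' k, P (sk k) * ENNReal.ofReal ((n:ℝ) * ε'))
              + (∑' k, P (sk k) * (a k : ℝ≥0∞))
              + ∑' k, P (sk k) * (2 * (n : ℝ≥0∞) * χ k) := by
              rw [← ENNReal.tsum_add, ← ENNReal.tsum_add]
              apply tsum_congr
              intro k
              rw [mul_add, mul_add]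
          _ ≤ ENNReal.ofReal ((n:ℝ) * ε') + ENNReal.ofReal (2 * Real.sqrt n)
              + ENNReal.ofReal (32 / r^2) := by
              refine add_le_add (add_le_add ?_ hSA) ?_
              · rw [ENNReal.tsum_mul_right, hp1, one_mul]
              · calc ∑' k, P (sk k) * (2 * (n : ℝ≥0∞) * χ k)
                    = 2 * (n : ℝ≥0∞) * ∑' k, P (sk k) * χ k := by
                      rw [← ENNReal.tsum_mul_left]
                      apply tsum_congr
                      intro k
                      ring
                  _ ≤ 2 * (n : ℝ≥0∞) * ENNReal.ofReal (16 / (r^2 * n)) :=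
                      mul_le_mul' le_rfl hSχ
                  _ = ENNReal.ofReal (32 / r^2) := by
                      have h2n : (2 * (n : ℝ≥0∞)) = ENNReal.ofReal (2 * n) := by
                        rw [ENNReal.ofReal_mul (by norm_num), ENNReal.ofReal_natCast]
                        norm_num
                      rw [h2n, ← ENNReal.ofReal_mul (by positivity)]
                      congr 1
                      field_simp
                      ring
          _ = ENNReal.ofReal ((n:ℝ) * ε' + 2 * Real.sqrt n + 32 / r^2) := by
              rw [← ENNReal.ofReal_add (by positivity) (by positivity),
                ← ENNReal.ofReal_add (by positivity) (by positivity)]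
      have hfinal : L ≤ ENNReal.ofReal (b n) := by
        refine le_trans hLle ?_
        refine le_trans (mul_le_mul' hsumX hEle) ?_
        rw [← ENNReal.ofReal_mul (by positivity)]
        apply ENNReal.ofReal_le_ofReal
        rw [hbdef]
        dsimp only
        have hs : Real.sqrt n * Real.sqrt n = n := Real.mul_self_sqrt hnpos.le
        have h2 : ((n:ℝ) * ε' + 2 * Real.sqrt n + 32 / r^2) * (C'/n)
            = C' * ε' + (2 * Real.sqrt n) * C' / n + (32 / r^2) * C' / n := by
          field_simp
        rw [h2]
        have h3 : (2 * Real.sqrt n) * C' / n ≤ 3 * C' / Real.sqrt n := by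
          rw [div_le_div_iff₀ hnpos hsqrtpos]
          nlinarith [Real.sqrt_nonneg (n:ℝ)]
        have h4 : (32 / r^2) * C' / n ≤ (128 * C' / r^2) / n := by
          have hr2 : (0:ℝ) < r^2 := by positivity
          have hnum : (32 / r^2) * C' ≤ 128 * C' / r^2 := by
            rw [div_mul_eq_mul_div, div_le_div_iff₀ hr2 hr2]
            nlinarith
          gcongr
        linarith
      exact ENNReal.toReal_le_of_le_ofReal (hbn0 n hn1) hfinal
  -- conclude
  filter_upwards [hbev, h1r, eventually_ge_atTop 1] with n h1 h2 h3
  have h4 := key n h3 h2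
  rw [Real.norm_eq_abs, abs_of_nonneg (integral_nonneg (fun ω => abs_nonneg _))]
  exact lt_of_le_of_lt h4 h1
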